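/- For every finite graph G and every integer k ≥ 1, there exists a k-Gomory-Hu tree of G. -/

import Mathlib

open Finset SimpleGraph

variable {V : Type} [Fintype V] [DecidableEq V]

/-- `C` is a `(u,v)`-cutset of `G`: `C` is the set of edges of `G` with one endpoint in `A`
and one endpoint in `B`, for some partition `(A, B)` of the vertex set with `u ∈ A`, `v ∈ B`. -/
def IsCutset (G : SimpleGraph V) (u v : V) (C : Finset (Sym2 V)) : Prop :=
  ∃ A B : Finset V, A ∪ B = Finset.univ ∧ Disjoint A B ∧ u ∈ A ∧ v ∈ B ∧
    ∀ e : Sym2 V, e ∈ C ↔ ∃ a ∈ A, ∃ b ∈ B, G.Adj a b ∧ e = s(a, b)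

attribute [local instance] Classical.propDecidable

set_option linter.unusedSectionVars false

/-- crossing predicate -/
def crossP (X : Finset V) : Sym2 V → Prop :=
  Sym2.lift ⟨fun a b => (a ∈ X ∧ b ∉ X) ∨ (b ∈ X ∧ a ∉ X), by
    intros; exact propext (by tauto)⟩

@[simp] lemma crossP_mk (X : Finset V) (a b : V) :
    crossP X s(a, b) ↔ (a ∈ X ∧ b ∉ X) ∨ (b ∈ X ∧ a ∉ X) := Iff.rfl

noncomputable def ecut (G : SimpleGraph V) (X : Finset V) : Finset (Sym2 V) :=
  Finset.univ.filter (fun e => e ∈ G.edgeSet ∧ crossP X e)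

lemma mem_ecut {G : SimpleGraph V} {X : Finset V} {e : Sym2 V} :
    e ∈ ecut G X ↔ e ∈ G.edgeSet ∧ crossP X e := by
  simp [ecut]

lemma ecut_compl (G : SimpleGraph V) (X : Finset V) : ecut G Xᶜ = ecut G X := by
  ext e
  induction e using Sym2.ind with
  | _ a b =>
    simp only [mem_ecut, crossP_mk, Finset.mem_compl]
    tauto

lemma ecut_card (G : SimpleGraph V) (X : Finset V) :
    (ecut G X).card = ∑ e : Sym2 V, (if e ∈ G.edgeSet ∧ crossP X e then 1 else 0) := by
  rw [ecut, Finset.card_filter]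

lemma ecut_card_submod (G : SimpleGraph V) (X Y : Finset V) :
    (ecut G (X ∩ Y)).card + (ecut G (X ∪ Y)).card ≤ (ecut G X).card + (ecut G Y).card := by
  simp only [ecut_card, ← Finset.sum_add_distrib]
  apply Finset.sum_le_sum
  intro e _
  induction e using Sym2.ind with
  | _ a b =>
    by_cases he : s(a, b) ∈ G.edgeSet
    · simp only [he, true_and, crossP_mk, Finset.mem_inter, Finset.mem_union]
      by_cases h1 : a ∈ X <;> by_cases h2 : b ∈ X <;> by_cases h3 : a ∈ Y <;>
        by_cases h4 : b ∈ Y <;> simp [h1, h2, h3, h4]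
    · simp [he]

lemma ecut_card_posimod (G : SimpleGraph V) (X Y : Finset V) :
    (ecut G (X \ Y)).card + (ecut G (Y \ X)).card ≤ (ecut G X).card + (ecut G Y).card := by
  have h := ecut_card_submod G X Yᶜ
  rw [ecut_compl] at h
  have e1 : X ∩ Yᶜ = X \ Y := by ext x; simp [Finset.mem_sdiff]
  have e2 : X ∪ Yᶜ = (Y \ X)ᶜ := by ext x; simp [Finset.mem_sdiff]; tauto
  rw [e1, e2, ecut_compl] at h
  exact h

/-- minimum cut value -/
noncomputable def mcv (G : SimpleGraph V) (u v : V) : ℕ :=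
  sInf {n | ∃ X : Finset V, u ∈ X ∧ v ∉ X ∧ (ecut G X).card = n}

lemma mcv_le {G : SimpleGraph V} {u v : V} {X : Finset V} (hu : u ∈ X) (hv : v ∉ X) :
    mcv G u v ≤ (ecut G X).card := Nat.sInf_le ⟨X, hu, hv, rfl⟩

lemma mcv_exists {G : SimpleGraph V} {u v : V} (h : u ≠ v) :
    ∃ X : Finset V, u ∈ X ∧ v ∉ X ∧ (ecut G X).card = mcv G u v := by
  have hne : {n | ∃ X : Finset V, u ∈ X ∧ v ∉ X ∧ (ecut G X).card = n}.Nonempty :=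
    ⟨(ecut G {u}).card, {u}, by simp, by simp [h.symm], rfl⟩
  exact Nat.sInf_mem hne

lemma mcv_symm (G : SimpleGraph V) (u v : V) : mcv G u v = mcv G v u := by
  have key : ∀ a b : V, mcv G a b ≤ mcv G b a := by
    intro a b
    by_cases hab : a = b
    · subst hab; rfl
    · obtain ⟨X, hb, ha, hc⟩ := mcv_exists (G := G) (Ne.symm hab)
      calc mcv G a b ≤ (ecut G Xᶜ).card :=
            mcv_le (by simpa using ha) (by simpa using hb)
        _ = mcv G b a := by rw [ecut_compl]; exact hc
  exact le_antisymm (key u v) (key v u)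

lemma mcv_triangle {G : SimpleGraph V} {a c : V} (b : V) (h : a ≠ c) :
    min (mcv G a b) (mcv G b c) ≤ mcv G a c := by
  obtain ⟨X, haX, hcX, hX⟩ := mcv_exists (G := G) h
  by_cases hb : b ∈ X
  · calc min (mcv G a b) (mcv G b c) ≤ mcv G b c := min_le_right _ _
      _ ≤ (ecut G X).card := mcv_le hb hcX
      _ = mcv G a c := hX
  · calc min (mcv G a b) (mcv G b c) ≤ mcv G a b := min_le_left _ _
      _ ≤ (ecut G X).card := mcv_le haX hb
      _ = mcv G a c := hX

lemma isCutset_iff {G : SimpleGraph V} {u v : V} {C : Finset (Sym2 V)} :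
    IsCutset G u v C ↔ ∃ X : Finset V, u ∈ X ∧ v ∉ X ∧ C = ecut G X := by
  constructor
  · rintro ⟨A, B, hun, hdis, hu, hv, hC⟩
    have hB : ∀ x, x ∈ B ↔ x ∉ A := by
      intro x
      constructor
      · intro hx hxA; exact (Finset.disjoint_left.1 hdis) hxA hx
      · intro hx
        have : x ∈ A ∪ B := hun ▸ Finset.mem_univ x
        rcases Finset.mem_union.1 this with h | h
        · exact absurd h hx
        · exact h
    refine ⟨A, hu, (hB v).1 hv, ?_⟩
    ext e
    rw [hC e, mem_ecut]
    constructor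
    · rintro ⟨a, ha, b, hb, hadj, rfl⟩
      exact ⟨hadj, Or.inl ⟨ha, fun hbA => (hB b).1 hb hbA⟩⟩
    · rintro ⟨he, hcr⟩
      induction e using Sym2.ind with
      | _ a b =>
        have hadj : G.Adj a b := he
        rcases (crossP_mk _ a b).1 hcr with ⟨h1, h2⟩ | ⟨h1, h2⟩
        · exact ⟨a, h1, b, (hB b).2 h2, hadj, rfl⟩
        · exact ⟨b, h1, a, (hB a).2 h2, hadj.symm, Sym2.eq_swap⟩
  · rintro ⟨X, hu, hv, rfl⟩
    refine ⟨X, Xᶜ, by simp, disjoint_compl_right, hu, by simpa using hv, ?_⟩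
    intro e
    rw [mem_ecut]
    constructor
    · rintro ⟨he, hcr⟩
      induction e using Sym2.ind with
      | _ a b =>
        have hadj : G.Adj a b := he
        rcases (crossP_mk _ a b).1 hcr with ⟨h1, h2⟩ | ⟨h1, h2⟩
        · exact ⟨a, h1, b, by simpa using h2, hadj, rfl⟩
        · exact ⟨b, h1, a, by simpa using h2, hadj.symm, Sym2.eq_swap⟩
    · rintro ⟨a, ha, b, hb, hadj, rfl⟩
      simp only [Finset.mem_compl] at hb
      exact ⟨hadj, Or.inl ⟨ha, hb⟩⟩

lemma isCutset_ecut {G : SimpleGraph V} {u v : V} {X : Finset V} (hu : u ∈ X) (hv : v ∉ X) :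
    IsCutset G u v (ecut G X) := isCutset_iff.2 ⟨X, hu, hv, rfl⟩
lemma uncross_one {G : SimpleGraph V} {S : Finset V} {n r : V}
    (hn : n ∈ S) (hr : r ∉ S) (hmin : mcv G n r = (ecut G S).card)
    {u v : V} {X : Finset V} (hu : u ∈ X) (hv : v ∉ X) (huS : u ∉ S) (hvS : v ∉ S) :
    ∃ X' : Finset V, u ∈ X' ∧ v ∉ X' ∧ (ecut G X').card ≤ (ecut G X).card ∧
      (S ⊆ X' ∨ Disjoint S X') ∧ ∀ A : Finset V, Disjoint A S → A ∩ X' = A ∩ X := by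
  by_cases hnX : n ∈ X
  · refine ⟨X ∪ S, Finset.mem_union_left _ hu, ?_, ?_, Or.inl Finset.subset_union_right, ?_⟩
    · simp [hv, hvS]
    · have h := ecut_card_submod G X S
      have h2 : mcv G n r ≤ (ecut G (X ∩ S)).card :=
        mcv_le (Finset.mem_inter.2 ⟨hnX, hn⟩) (fun hc => hr (Finset.mem_inter.1 hc).2)
      omega
    · intro A hA
      ext x
      simp only [Finset.mem_inter, Finset.mem_union]
      constructor
      · rintro ⟨hxA, hx | hx⟩
        · exact ⟨hxA, hx⟩
        · exact absurd hx (Finset.disjoint_left.1 hA hxA)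
      · rintro ⟨hxA, hx⟩; exact ⟨hxA, Or.inl hx⟩
  · refine ⟨X \ S, Finset.mem_sdiff.2 ⟨hu, huS⟩, fun hc => hv (Finset.mem_sdiff.1 hc).1, ?_,
      Or.inr (by simp [Finset.disjoint_left]; tauto), ?_⟩
    · have h := ecut_card_posimod G X S
      have h2 : mcv G n r ≤ (ecut G (S \ X)).card :=
        mcv_le (Finset.mem_sdiff.2 ⟨hn, hnX⟩) (fun hc => hr (Finset.mem_sdiff.1 hc).1)
      omega
    · intro A hA
      ext x
      simp only [Finset.mem_inter, Finset.mem_sdiff]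
      constructor
      · rintro ⟨hxA, hx, _⟩; exact ⟨hxA, hx⟩
      · rintro ⟨hxA, hx⟩
        exact ⟨hxA, hx, Finset.disjoint_left.1 hA hxA⟩

lemma uncross_list {G : SimpleGraph V} :
    ∀ (L : List (Finset V × V × V)),
      (∀ t ∈ L, t.2.1 ∈ t.1 ∧ t.2.2 ∉ t.1 ∧ mcv G t.2.1 t.2.2 = (ecut G t.1).card) →
      L.Pairwise (fun t t' => Disjoint t.1 t'.1) →
      ∀ (u v : V) (X : Finset V), u ∈ X → v ∉ X →
      (∀ t ∈ L, u ∉ t.1 ∧ v ∉ t.1) →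
      ∃ X' : Finset V, u ∈ X' ∧ v ∉ X' ∧ (ecut G X').card ≤ (ecut G X).card ∧
        ∀ t ∈ L, t.1 ⊆ X' ∨ Disjoint t.1 X' := by
  intro L
  induction L with
  | nil => exact fun _ _ u v X hu hv _ => ⟨X, hu, hv, le_rfl, by simp⟩
  | cons t L ih =>
    intro hdata hpw u v X hu hv hmem
    obtain ⟨X₁, hu₁, hv₁, hc₁, hresp₁⟩ := ih (fun t' ht' => hdata t' (List.mem_cons_of_mem _ ht'))
      (List.Pairwise.sublist (List.sublist_cons_self _ _) hpw) u v X hu hv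
      (fun t' ht' => hmem t' (List.mem_cons_of_mem _ ht'))
    obtain ⟨hn, hrS, hminS⟩ := hdata t (List.mem_cons_self)
    obtain ⟨huS, hvS⟩ := hmem t (List.mem_cons_self)
    obtain ⟨X', hu', hv', hc', hS', hpres⟩ :=
      uncross_one hn hrS hminS hu₁ hv₁ huS hvS
    refine ⟨X', hu', hv', le_trans hc' hc₁, ?_⟩
    intro t' ht'
    rcases List.mem_cons.1 ht' with rfl | ht'
    · rcases hS' with h | h
      · exact Or.inl h
      · exact Or.inr h
    · have hdisj : Disjoint t'.1 t.1 :=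
        ((List.pairwise_cons.1 hpw).1 t' ht').symm
      have hpres' := hpres t'.1 hdisj
      rcases hresp₁ t' ht' with h | h
      · left
        intro x hx
        have : x ∈ t'.1 ∩ X' := by rw [hpres']; exact Finset.mem_inter.2 ⟨hx, h hx⟩
        exact (Finset.mem_inter.1 this).2
      · right
        rw [Finset.disjoint_left]
        intro x hx hx'
        have : x ∈ t'.1 ∩ X' := Finset.mem_inter.2 ⟨hx, hx'⟩
        rw [hpres'] at this
        exact (Finset.disjoint_left.1 h) hx (Finset.mem_inter.1 this).2

/-- replacement lemma: a rep on the wrong side of a minimum cut can be replaced. -/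
lemma rep_replace {G : SimpleGraph V} {S X : Finset V} {n r u v : V}
    (hn : n ∈ S) (hrS : r ∉ S) (hminS : mcv G n r = (ecut G S).card)
    (hu : u ∈ X) (hv : v ∉ X) (hminX : mcv G u v = (ecut G X).card)
    (hSX : S ⊆ X) (huS : u ∉ S) (hrX : r ∉ X) :
    mcv G n u = (ecut G S).card := by
  have hnu : n ≠ u := fun h => huS (h ▸ hn)
  apply le_antisymm (mcv_le hn huS)
  rw [← hminS]
  obtain ⟨Y, hnY, huY, hY⟩ := mcv_exists (G := G) hnu
  rw [← hY]
  by_cases hrY : r ∈ Y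
  · -- uncross Y with Xᶜ
    have hsub := ecut_card_submod G Y Xᶜ
    rw [ecut_compl] at hsub
    have h1 : mcv G v u ≤ (ecut G (Y ∪ Xᶜ)).card := by
      apply mcv_le (Finset.mem_union_right _ (by simpa using hv))
      simp only [Finset.mem_union, Finset.mem_compl]
      push_neg
      exact ⟨huY, hu⟩
    rw [← mcv_symm, hminX] at h1
    have h2 : mcv G n r ≤ (ecut G (Y ∩ Xᶜ)).card := by
      rw [mcv_symm]
      apply mcv_le (Finset.mem_inter.2 ⟨hrY, by simpa using hrX⟩)
      simp only [Finset.mem_inter, Finset.mem_compl]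
      push_neg
      intro _
      exact hSX hn
    omega
  · exact mcv_le hnY hrY
section SumGraph

variable {W₁ W₂ : Type}

/-- two graphs joined by one edge -/
def sumG (T₁ : SimpleGraph W₁) (T₂ : SimpleGraph W₂) (a : W₁) (b : W₂) :
    SimpleGraph (W₁ ⊕ W₂) where
  Adj x y := match x, y with
    | .inl x, .inl y => T₁.Adj x y
    | .inr x, .inr y => T₂.Adj x y
    | .inl x, .inr y => x = a ∧ y = b
    | .inr x, .inl y => x = b ∧ y = a
  symm := by
    refine ⟨?_⟩; rintro (x | x) (y | y) h
    · exact T₁.symm.symm _ _ h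
    · exact ⟨h.2, h.1⟩
    · exact ⟨h.2, h.1⟩
    · exact T₂.symm.symm _ _ h
  loopless := by
    refine ⟨?_⟩; rintro (x | x) h
    · exact T₁.loopless.irrefl x h
    · exact T₂.loopless.irrefl x h

variable {T₁ : SimpleGraph W₁} {T₂ : SimpleGraph W₂} {a : W₁} {b : W₂}

@[simp] lemma sumG_adj_ll {x y : W₁} : (sumG T₁ T₂ a b).Adj (.inl x) (.inl y) ↔ T₁.Adj x y :=
  Iff.rfl
@[simp] lemma sumG_adj_rr {x y : W₂} : (sumG T₁ T₂ a b).Adj (.inr x) (.inr y) ↔ T₂.Adj x y :=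
  Iff.rfl
@[simp] lemma sumG_adj_lr {x : W₁} {y : W₂} :
    (sumG T₁ T₂ a b).Adj (.inl x) (.inr y) ↔ x = a ∧ y = b := Iff.rfl
@[simp] lemma sumG_adj_rl {x : W₂} {y : W₁} :
    (sumG T₁ T₂ a b).Adj (.inr x) (.inl y) ↔ x = b ∧ y = a := Iff.rfl

def homL : T₁ →g sumG T₁ T₂ a b := ⟨Sum.inl, fun h => h⟩
def homR : T₂ →g sumG T₁ T₂ a b := ⟨Sum.inr, fun h => h⟩

@[simp] lemma homL_apply (x : W₁) : (homL : T₁ →g sumG T₁ T₂ a b) x = Sum.inl x := rfl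
@[simp] lemma homR_apply (x : W₂) : (homR : T₂ →g sumG T₁ T₂ a b) x = Sum.inr x := rfl

/-- a step that is not the bridge preserves the side -/
lemma step_side {s d : W₁ ⊕ W₂} (h : (sumG T₁ T₂ a b).Adj s d)
    (hne : s(s, d) ≠ s(Sum.inl a, Sum.inr b)) : s.isLeft = d.isLeft := by
  rcases s with x | x <;> rcases d with y | y
  · rfl
  · exact absurd (by rw [h.1, h.2]) hne
  · exact absurd (by rw [h.1, h.2, Sym2.eq_swap]) hne
  · rfl

/-- a walk avoiding the bridge stays on one side -/
lemma walk_side : ∀ {s c : W₁ ⊕ W₂} (p : (sumG T₁ T₂ a b).Walk s c),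
    s(Sum.inl a, Sum.inr b) ∉ p.edges → s.isLeft = c.isLeft := by
  intro s c p
  induction p with
  | nil => intro _; rfl
  | cons h p ih =>
    intro hbr
    rw [SimpleGraph.Walk.edges_cons, List.mem_cons] at hbr
    push_neg at hbr
    exact (step_side h (Ne.symm hbr.1)).trans (ih hbr.2)

/-- a trail containing the bridge changes sides -/
lemma walk_bridge_side : ∀ {s c : W₁ ⊕ W₂} (p : (sumG T₁ T₂ a b).Walk s c),
    p.IsTrail → s(Sum.inl a, Sum.inr b) ∈ p.edges → s.isLeft ≠ c.isLeft := by
  intro s c p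
  induction p with
  | nil => intro _ h; simp at h
  | cons h p ih =>
    intro htr hbr
    rw [SimpleGraph.Walk.edges_cons, List.mem_cons] at hbr
    have htr' := (SimpleGraph.Walk.isTrail_cons _ _).1 htr
    rcases hbr with heq | hbr
    · have hw := walk_side p (heq ▸ htr'.2)
      rcases Sym2.eq_iff.1 heq with ⟨h1, h2⟩ | ⟨h1, h2⟩ <;> subst h1 <;> subst h2 <;> simp_all
    · have hne : s(_, _) ≠ s(Sum.inl a, Sum.inr b) := fun hc => htr'.2 (hc ▸ hbr)
      have h1 := step_side h hne
      intro hc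
      exact ih htr'.1 hbr (h1.symm.trans hc)

/-- projection of a bridge-free walk starting on the left -/
lemma walk_proj_left : ∀ {s c : W₁ ⊕ W₂} (p : (sumG T₁ T₂ a b).Walk s c),
    s(Sum.inl a, Sum.inr b) ∉ p.edges → ∀ x, s = Sum.inl x →
    ∃ (y : W₁) (q : T₁.Walk x y), c = Sum.inl y ∧
      p.edges = q.edges.map (Sym2.map Sum.inl) ∧ p.support = q.support.map Sum.inl := by
  intro s c p
  induction p with
  | nil =>
    rintro _ x rfl
    exact ⟨x, SimpleGraph.Walk.nil, rfl, by simp, by simp⟩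
  | @cons s d cc h p ih =>
    rintro hbr x rfl
    rw [SimpleGraph.Walk.edges_cons, List.mem_cons] at hbr
    push_neg at hbr
    rcases d with x' | y'
    · obtain ⟨y, q, rfl, he, hs⟩ := ih hbr.2 x' rfl
      exact ⟨y, SimpleGraph.Walk.cons h q, rfl, by simp [he]; rfl, by simp [hs]; rfl⟩
    · exact absurd (by rw [h.1, h.2]) (Ne.symm hbr.1)

lemma walk_proj_right : ∀ {s c : W₁ ⊕ W₂} (p : (sumG T₁ T₂ a b).Walk s c),
    s(Sum.inl a, Sum.inr b) ∉ p.edges → ∀ x, s = Sum.inr x →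
    ∃ (y : W₂) (q : T₂.Walk x y), c = Sum.inr y ∧
      p.edges = q.edges.map (Sym2.map Sum.inr) ∧ p.support = q.support.map Sum.inr := by
  intro s c p
  induction p with
  | nil =>
    rintro _ x rfl
    exact ⟨x, SimpleGraph.Walk.nil, rfl, by simp, by simp⟩
  | @cons s d cc h p ih =>
    rintro hbr x rfl
    rw [SimpleGraph.Walk.edges_cons, List.mem_cons] at hbr
    push_neg at hbr
    rcases d with x' | y'
    · exact absurd (by rw [h.1, h.2, Sym2.eq_swap]) (Ne.symm hbr.1)
    · obtain ⟨y, q, rfl, he, hs⟩ := ih hbr.2 y' rfl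
      exact ⟨y, SimpleGraph.Walk.cons h q, rfl, by simp [he]; rfl, by simp [hs]; rfl⟩

/-- decomposition of a trail crossing the bridge -/
lemma walk_proj_cross : ∀ {s c : W₁ ⊕ W₂} (p : (sumG T₁ T₂ a b).Walk s c),
    p.IsTrail → ∀ x z, s = Sum.inl x → c = Sum.inr z →
    ∃ (q₁ : T₁.Walk x a) (q₂ : T₂.Walk b z),
      p.edges = q₁.edges.map (Sym2.map Sum.inl) ++
        s(Sum.inl a, Sum.inr b) :: q₂.edges.map (Sym2.map Sum.inr) ∧
      p.support = q₁.support.map Sum.inl ++ q₂.support.map Sum.inr := by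
  intro s c p
  induction p with
  | nil =>
    rintro _ x z rfl h
    exact absurd h (by simp)
  | @cons s d cc h p ih =>
    rintro htr x z rfl rfl
    have htr' := (SimpleGraph.Walk.isTrail_cons _ _).1 htr
    rcases d with x' | y'
    · obtain ⟨q₁, q₂, he, hs⟩ := ih htr'.1 x' z rfl rfl
      exact ⟨SimpleGraph.Walk.cons h q₁, q₂, by simp [he]; rfl, by simp [hs]; rfl⟩
    · have hx : x = a := h.1
      have hy : y' = b := h.2
      have hbr : s(Sum.inl a, Sum.inr b) ∉ p.edges := by
        have h2 := htr'.2
        have he : (s(Sum.inl x, Sum.inr y') : Sym2 (W₁ ⊕ W₂)) = s(Sum.inl a, Sum.inr b) := by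
          rw [hx, hy]
        exact he ▸ h2
      obtain ⟨y, q, hc, he, hs⟩ := walk_proj_right p hbr y' rfl
      obtain rfl : z = y := by injection hc
      refine ⟨(SimpleGraph.Walk.nil : T₁.Walk a a).copy hx.symm rfl, q.copy hy rfl, ?_, ?_⟩
      · rw [SimpleGraph.Walk.edges_cons, he]
        simp [hx, hy]
      · rw [SimpleGraph.Walk.support_cons, hs]
        simp [hx, hy]

lemma sumG_isTree (h₁ : T₁.IsTree) (h₂ : T₂.IsTree) : (sumG T₁ T₂ a b).IsTree := by
  constructor
  · have hreach : ∀ w : W₁ ⊕ W₂, (sumG T₁ T₂ a b).Reachable w (Sum.inl a) := by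
      rintro (x | x)
      · exact (h₁.1.preconnected x a).map (homL : T₁ →g sumG T₁ T₂ a b)
      · refine SimpleGraph.Reachable.trans
          (((h₂.1.preconnected x b).map (homR : T₂ →g sumG T₁ T₂ a b)))
          (SimpleGraph.Adj.reachable ?_)
        exact ⟨rfl, rfl⟩
    have : Nonempty (W₁ ⊕ W₂) := ⟨Sum.inl a⟩
    exact SimpleGraph.Connected.mk fun u v => (hreach u).trans (hreach v).symm
  · rintro (v | v) p hp
    · by_cases hbr : s(Sum.inl a, Sum.inr b) ∈ p.edges
      · exact absurd rfl (walk_bridge_side p hp.isTrail hbr)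
      · obtain ⟨y, q, hy, he, hs⟩ := walk_proj_left p hbr v rfl
        obtain rfl : v = y := by injection hy
        refine h₁.2 q ((SimpleGraph.Walk.isCycle_def q).2 ⟨?_, ?_, ?_⟩)
        · rw [SimpleGraph.Walk.isTrail_def]
          exact List.Nodup.of_map _ (he ▸ ((SimpleGraph.Walk.isCycle_def p).1 hp).1.edges_nodup)
        · rintro rfl
          have h3 := hp.three_le_length
          have : p.edges.length = 0 := by rw [he]; simp
          rw [SimpleGraph.Walk.length_edges] at this
          omega
        · have htail : p.support.tail = q.support.tail.map Sum.inl := by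
            rw [hs, q.support_eq_cons]; simp
          exact List.Nodup.of_map _
            (htail ▸ ((SimpleGraph.Walk.isCycle_def p).1 hp).2.2)
    · by_cases hbr : s(Sum.inl a, Sum.inr b) ∈ p.edges
      · exact absurd rfl (walk_bridge_side p hp.isTrail hbr)
      · obtain ⟨y, q, hy, he, hs⟩ := walk_proj_right p hbr v rfl
        obtain rfl : v = y := by injection hy
        refine h₂.2 q ((SimpleGraph.Walk.isCycle_def q).2 ⟨?_, ?_, ?_⟩)
        · rw [SimpleGraph.Walk.isTrail_def]
          exact List.Nodup.of_map _ (he ▸ ((SimpleGraph.Walk.isCycle_def p).1 hp).1.edges_nodup)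
        · rintro rfl
          have h3 := hp.three_le_length
          have : p.edges.length = 0 := by rw [he]; simp
          rw [SimpleGraph.Walk.length_edges] at this
          omega
        · have htail : p.support.tail = q.support.tail.map Sum.inr := by
            rw [hs, q.support_eq_cons]; simp
          exact List.Nodup.of_map _
            (htail ▸ ((SimpleGraph.Walk.isCycle_def p).1 hp).2.2)

end SumGraph
section SumHelp

variable {W₁ W₂ : Type}

lemma mapinl_ne_bridge (e : Sym2 W₁) (a : W₁) (b : W₂) :
    Sym2.map Sum.inl e ≠ s(Sum.inl a, Sum.inr b) := by
  induction e using Sym2.ind with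
  | _ x y =>
    rw [Sym2.map_pair_eq]
    intro h
    rcases Sym2.eq_iff.1 h with ⟨h1, h2⟩ | ⟨h1, h2⟩ <;> simp at h1 h2

lemma mapinr_ne_bridge (e : Sym2 W₂) (a : W₁) (b : W₂) :
    Sym2.map Sum.inr e ≠ s(Sum.inl a, Sum.inr b) := by
  induction e using Sym2.ind with
  | _ x y =>
    rw [Sym2.map_pair_eq]
    intro h
    rcases Sym2.eq_iff.1 h with ⟨h1, h2⟩ | ⟨h1, h2⟩ <;> simp at h1 h2

lemma mapinl_ne_mapinr (e₁ : Sym2 W₁) (e₂ : Sym2 W₂) :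
    Sym2.map Sum.inl e₁ ≠ Sym2.map Sum.inr e₂ := by
  induction e₁ using Sym2.ind with
  | _ x y =>
    induction e₂ using Sym2.ind with
    | _ c d =>
      rw [Sym2.map_pair_eq, Sym2.map_pair_eq]
      intro h
      rcases Sym2.eq_iff.1 h with ⟨h1, h2⟩ | ⟨h1, h2⟩ <;> simp at h1 h2

noncomputable def sumAlpha {U : Type} (α₁ : Sym2 W₁ → Finset (Sym2 U))
    (α₂ : Sym2 W₂ → Finset (Sym2 U)) (C : Finset (Sym2 U)) :
    Sym2 (W₁ ⊕ W₂) → Finset (Sym2 U) :=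
  Sym2.lift ⟨fun n₁ n₂ => match n₁, n₂ with
    | .inl x, .inl y => α₁ s(x, y)
    | .inr x, .inr y => α₂ s(x, y)
    | _, _ => C, by
      rintro (x | x) (y | y)
      · show α₁ s(x, y) = α₁ s(y, x)
        rw [Sym2.eq_swap]
      · rfl
      · rfl
      · show α₂ s(x, y) = α₂ s(y, x)
        rw [Sym2.eq_swap]⟩

variable {U : Type} {α₁ : Sym2 W₁ → Finset (Sym2 U)} {α₂ : Sym2 W₂ → Finset (Sym2 U)}
  {C : Finset (Sym2 U)}

@[simp] lemma sumAlpha_ll (x y : W₁) :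
    sumAlpha α₁ α₂ C s(Sum.inl x, Sum.inl y) = α₁ s(x, y) := by
  rw [sumAlpha, Sym2.lift_mk]
@[simp] lemma sumAlpha_rr (x y : W₂) :
    sumAlpha α₁ α₂ C s(Sum.inr x, Sum.inr y) = α₂ s(x, y) := by
  rw [sumAlpha, Sym2.lift_mk]
@[simp] lemma sumAlpha_lr (x : W₁) (y : W₂) :
    sumAlpha α₁ α₂ C s(Sum.inl x, Sum.inr y) = C := by
  rw [sumAlpha, Sym2.lift_mk]
@[simp] lemma sumAlpha_rl (x : W₂) (y : W₁) :
    sumAlpha α₁ α₂ C s(Sum.inr x, Sum.inl y) = C := by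
  rw [sumAlpha, Sym2.lift_mk]

end SumHelp
section Main

variable (G : SimpleGraph V) (k : ℕ)

/-- partial Gomory–Hu data for region `R` with hanging pieces `H`. -/
structure GHT (R : Finset V) (H : List (Finset V × V × V)) where
  W : Type
  fin : Fintype W
  T : SimpleGraph W
  γ : V → W
  α : Sym2 W → Finset (Sym2 V)
  tree : T.IsTree
  const : ∀ t ∈ H, ∀ s ∈ t.1, γ s = γ t.2.1
  reps : ∀ t ∈ H, ∃ ρ ∈ R, γ ρ = γ t.2.1 ∧ mcv G t.2.1 ρ = (ecut G t.1).card
  sep : ∀ u ∈ R, ∀ v ∈ R, γ u = γ v → u ≠ v → k ≤ mcv G u v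
  edge : ∀ e ∈ T.edgeSet, ∃ (X : Finset V) (p q : V), α e = ecut G X ∧
      (ecut G X).card < k ∧
      p ∈ R ∧ q ∈ R ∧ p ∈ X ∧ q ∉ X ∧ mcv G p q = (ecut G X).card ∧ e = s(γ p, γ q) ∧
      ∀ w z : V, ∀ pw : T.Walk (γ w) (γ z), pw.IsPath → e ∈ pw.edges →
        (w ∈ X ∧ z ∉ X) ∨ (z ∈ X ∧ w ∉ X)

def Ctx (R : Finset V) (H : List (Finset V × V × V)) : Prop :=
  (∀ t ∈ H, t.2.1 ∈ t.1 ∧ t.2.2 ∈ R ∧ (ecut G t.1).card < k ∧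
      mcv G t.2.1 t.2.2 = (ecut G t.1).card) ∧
  (∀ t ∈ H, Disjoint t.1 R) ∧
  H.Pairwise (fun t t' => Disjoint t.1 t'.1)

lemma punit_isTree : (⊥ : SimpleGraph PUnit).IsTree := by
  constructor
  · exact SimpleGraph.Connected.mk fun u v => by
      cases u; cases v; exact SimpleGraph.Reachable.refl _
  · intro v p hp
    cases p with
    | nil => exact hp.ne_nil rfl
    | cons h _ => exact h.elim

lemma ght_base {R : Finset V} {H : List (Finset V × V × V)} (hctx : Ctx G k R H)
    (hno : ∀ u ∈ R, ∀ v ∈ R, u ≠ v → k ≤ mcv G u v) : Nonempty (GHT G k R H) := by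
  refine ⟨{
    W := PUnit
    fin := inferInstance
    T := ⊥
    γ := fun _ => PUnit.unit
    α := fun _ => ∅
    tree := punit_isTree
    const := fun _ _ _ _ => rfl
    reps := fun t ht => ⟨t.2.2, (hctx.1 t ht).2.1, rfl, (hctx.1 t ht).2.2.2⟩
    sep := fun u hu v hv _ hne => hno u hu v hv hne
    edge := fun e he => by
      rw [SimpleGraph.edgeSet_bot] at he
      exact absurd he (Set.notMem_empty e) }⟩
theorem ght_build (hk : 1 ≤ k) :
    ∀ (N : ℕ) (R : Finset V) (H : List (Finset V × V × V)),
      R.card ≤ N → R.Nonempty → Ctx G k R H → Nonempty (GHT G k R H) := by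
  intro N
  induction N with
  | zero =>
    intro R H hN hne _
    rw [Finset.card_eq_zero.1 (Nat.le_zero.1 hN)] at hne
    exact absurd hne (by simp)
  | succ N ih =>
    intro R H hN hRne hctx
    by_cases hsplit : ∃ u ∈ R, ∃ v ∈ R, u ≠ v ∧ mcv G u v < k
    · obtain ⟨u, hu, v, hv, huv, hlt⟩ := hsplit
      obtain ⟨X₀, hu0, hv0, hc0⟩ := mcv_exists (G := G) huv
      have hdata : ∀ t ∈ H, t.2.1 ∈ t.1 ∧ t.2.2 ∉ t.1 ∧
          mcv G t.2.1 t.2.2 = (ecut G t.1).card := by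
        intro t ht
        obtain ⟨hn, hr, _, hm⟩ := hctx.1 t ht
        exact ⟨hn, Finset.disjoint_right.1 (hctx.2.1 t ht) hr, hm⟩
      have hmemH : ∀ t ∈ H, u ∉ t.1 ∧ v ∉ t.1 := fun t ht =>
        ⟨Finset.disjoint_right.1 (hctx.2.1 t ht) hu,
         Finset.disjoint_right.1 (hctx.2.1 t ht) hv⟩
      obtain ⟨X, huX, hvX, hcle, hresp⟩ :=
        uncross_list H hdata hctx.2.2 u v X₀ hu0 hv0 hmemH
      have hXmin : (ecut G X).card = mcv G u v :=
        le_antisymm (le_trans hcle (le_of_eq hc0)) (mcv_le huX hvX)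
      have hcut_lt : (ecut G X).card < k := by omega
      -- the two sub-contexts
      set R₁ := R ∩ X with hR₁
      set R₂ := R \ X with hR₂
      set H₁ := (Xᶜ, v, u) :: ((H.filter (fun t => decide (t.1 ⊆ X))).map
        (fun t => (t.1, t.2.1, if t.2.2 ∈ X then t.2.2 else u))) with hH₁
      set H₂ := (X, u, v) :: ((H.filter (fun t => decide (Disjoint t.1 X))).map
        (fun t => (t.1, t.2.1, if t.2.2 ∈ X then v else t.2.2))) with hH₂
      have huR₁ : u ∈ R₁ := Finset.mem_inter.2 ⟨hu, huX⟩
      have hvR₂ : v ∈ R₂ := Finset.mem_sdiff.2 ⟨hv, hvX⟩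
      have hR₁R : R₁ ⊆ R := Finset.inter_subset_left
      have hR₂R : R₂ ⊆ R := Finset.sdiff_subset
      have hR₁X : ∀ x ∈ R₁, x ∈ X := fun x hx => (Finset.mem_inter.1 hx).2
      have hR₂X : ∀ x ∈ R₂, x ∉ X := fun x hx => (Finset.mem_sdiff.1 hx).2
      have hcard₁ : R₁.card ≤ N := by
        have : R₁ ⊂ R := Finset.ssubset_iff_of_subset hR₁R |>.2
          ⟨v, hv, fun hc => hvX (hR₁X v hc)⟩
        have := Finset.card_lt_card this
        omega
      have hcard₂ : R₂.card ≤ N := by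
        have : R₂ ⊂ R := Finset.ssubset_iff_of_subset hR₂R |>.2
          ⟨u, hu, fun hc => (hR₂X u hc) huX⟩
        have := Finset.card_lt_card this
        omega
      have hmemH₁ : ∀ t ∈ H₁, (t.1 = Xᶜ ∧ t.2.1 = v ∧ t.2.2 = u) ∨
          ∃ t' ∈ H, t'.1 ⊆ X ∧ t.1 = t'.1 ∧ t.2.1 = t'.2.1 ∧
            (t.2.2 = t'.2.2 ∧ t'.2.2 ∈ X ∨ t.2.2 = u ∧ t'.2.2 ∉ X) := by
        intro t ht
        rw [hH₁, List.mem_cons] at ht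
        rcases ht with rfl | ht
        · exact Or.inl ⟨rfl, rfl, rfl⟩
        · obtain ⟨t', ht', rfl⟩ := List.mem_map.1 ht
          rw [List.mem_filter] at ht'
          refine Or.inr ⟨t', ht'.1, by simpa using ht'.2, rfl, rfl, ?_⟩
          by_cases hX : t'.2.2 ∈ X
          · exact Or.inl ⟨by simp [hX], hX⟩
          · exact Or.inr ⟨by simp [hX], hX⟩
      have hmemH₂ : ∀ t ∈ H₂, (t.1 = X ∧ t.2.1 = u ∧ t.2.2 = v) ∨
          ∃ t' ∈ H, Disjoint t'.1 X ∧ t.1 = t'.1 ∧ t.2.1 = t'.2.1 ∧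
            (t.2.2 = t'.2.2 ∧ t'.2.2 ∉ X ∨ t.2.2 = v ∧ t'.2.2 ∈ X) := by
        intro t ht
        rw [hH₂, List.mem_cons] at ht
        rcases ht with rfl | ht
        · exact Or.inl ⟨rfl, rfl, rfl⟩
        · obtain ⟨t', ht', rfl⟩ := List.mem_map.1 ht
          rw [List.mem_filter] at ht'
          refine Or.inr ⟨t', ht'.1, by simpa using ht'.2, rfl, rfl, ?_⟩
          by_cases hX : t'.2.2 ∈ X
          · exact Or.inr ⟨by simp [hX], hX⟩
          · exact Or.inl ⟨by simp [hX], hX⟩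
      have hctx₁ : Ctx G k R₁ H₁ := by
        refine ⟨?_, ?_, ?_⟩
        · intro t ht
          rcases hmemH₁ t ht with ⟨h1, h2, h3⟩ | ⟨t', ht', hsub, h1, h2, h3⟩
          · refine ⟨by rw [h1, h2]; simpa using hvX, by rw [h3]; exact huR₁, ?_, ?_⟩
            · rw [h1, ecut_compl]; exact hcut_lt
            · rw [h1, h2, h3, ecut_compl, mcv_symm]; exact hXmin.symm
          · obtain ⟨hn, hrR, hck, hm⟩ := hctx.1 t' ht'
            have hnS : t.2.1 ∈ t.1 := by rw [h1, h2]; exact hn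
            refine ⟨hnS, ?_, by rw [h1]; exact hck, ?_⟩
            · rcases h3 with ⟨h4, h5⟩ | ⟨h4, h5⟩
              · rw [h4]; exact Finset.mem_inter.2 ⟨hrR, h5⟩
              · rw [h4]; exact huR₁
            · rcases h3 with ⟨h4, h5⟩ | ⟨h4, h5⟩
              · rw [h1, h2, h4]; exact hm
              · rw [h1, h2, h4]
                exact rep_replace hn (Finset.disjoint_right.1 (hctx.2.1 t' ht') hrR) hm
                  huX hvX hXmin.symm hsub
                  (Finset.disjoint_right.1 (hctx.2.1 t' ht') hu) h5
        · intro t ht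
          rcases hmemH₁ t ht with ⟨h1, _, _⟩ | ⟨t', ht', _, h1, _, _⟩
          · rw [h1, Finset.disjoint_left]
            intro x hx
            simp only [Finset.mem_compl] at hx
            exact fun hc => hx (hR₁X x hc)
          · rw [h1]
            exact Finset.disjoint_of_subset_right hR₁R (hctx.2.1 t' ht')
        · rw [hH₁]
          refine List.pairwise_cons.2 ⟨?_, ?_⟩
          · intro t ht
            obtain ⟨t', ht', rfl⟩ := List.mem_map.1 ht
            rw [List.mem_filter] at ht'
            have hsub : t'.1 ⊆ X := by simpa using ht'.2
            rw [Finset.disjoint_left]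
            intro x hx
            simp only [Finset.mem_compl] at hx
            exact fun hc => hx (hsub hc)
          · rw [List.pairwise_map]
            exact (hctx.2.2.filter _).imp (fun h => h)
      have hctx₂ : Ctx G k R₂ H₂ := by
        refine ⟨?_, ?_, ?_⟩
        · intro t ht
          rcases hmemH₂ t ht with ⟨h1, h2, h3⟩ | ⟨t', ht', hsub, h1, h2, h3⟩
          · refine ⟨by rw [h1, h2]; exact huX, by rw [h3]; exact hvR₂, ?_, ?_⟩
            · rw [h1]; exact hcut_lt
            · rw [h1, h2, h3]; exact hXmin.symm
          · obtain ⟨hn, hrR, hck, hm⟩ := hctx.1 t' ht'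
            have hnS : t.2.1 ∈ t.1 := by rw [h1, h2]; exact hn
            have hnX : t'.2.1 ∉ X := Finset.disjoint_left.1 hsub hn
            refine ⟨hnS, ?_, by rw [h1]; exact hck, ?_⟩
            · rcases h3 with ⟨h4, h5⟩ | ⟨h4, h5⟩
              · rw [h4]; exact Finset.mem_sdiff.2 ⟨hrR, h5⟩
              · rw [h4]; exact hvR₂
            · rcases h3 with ⟨h4, h5⟩ | ⟨h4, h5⟩
              · rw [h1, h2, h4]; exact hm
              · rw [h1, h2, h4]
                refine rep_replace (X := Xᶜ) (u := v) (v := u) hn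
                  (Finset.disjoint_right.1 (hctx.2.1 t' ht') hrR) hm
                  (by simpa using hvX) (by simpa using huX) ?_ ?_
                  (Finset.disjoint_right.1 (hctx.2.1 t' ht') hv) (by simpa using h5)
                · rw [ecut_compl, mcv_symm]; exact hXmin.symm
                · intro x hx
                  simp only [Finset.mem_compl]
                  exact Finset.disjoint_left.1 hsub hx
        · intro t ht
          rcases hmemH₂ t ht with ⟨h1, _, _⟩ | ⟨t', ht', _, h1, _, _⟩
          · rw [h1, Finset.disjoint_left]
            intro x hx hc
            exact hR₂X x hc hx
          · rw [h1]
            exact Finset.disjoint_of_subset_right hR₂R (hctx.2.1 t' ht')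
        · rw [hH₂]
          refine List.pairwise_cons.2 ⟨?_, ?_⟩
          · intro t ht
            obtain ⟨t', ht', rfl⟩ := List.mem_map.1 ht
            rw [List.mem_filter] at ht'
            have hsub : Disjoint t'.1 X := by simpa using ht'.2
            exact hsub.symm
          · rw [List.pairwise_map]
            exact (hctx.2.2.filter _).imp (fun h => h)
      obtain ⟨D₁⟩ := ih R₁ H₁ hcard₁ ⟨u, huR₁⟩ hctx₁
      obtain ⟨D₂⟩ := ih R₂ H₂ hcard₂ ⟨v, hvR₂⟩ hctx₂
      haveI : Fintype D₁.W := D₁.fin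
      haveI : Fintype D₂.W := D₂.fin
      have hheadH₁ : ((Xᶜ, v, u) : Finset V × V × V) ∈ H₁ := by
        rw [hH₁]; exact List.mem_cons_self
      have hheadH₂ : ((X, u, v) : Finset V × V × V) ∈ H₂ := by
        rw [hH₂]; exact List.mem_cons_self
      have hγ1out : ∀ x, x ∉ X → D₁.γ x = D₁.γ v := fun x h =>
        D₁.const (Xᶜ, v, u) hheadH₁ x (by simpa using h)
      have hγ2in : ∀ x, x ∈ X → D₂.γ x = D₂.γ u := fun x h =>
        D₂.const (X, u, v) hheadH₂ x h
      let TT : SimpleGraph (D₁.W ⊕ D₂.W) := sumG D₁.T D₂.T (D₁.γ v) (D₂.γ u)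
      let γγ : V → D₁.W ⊕ D₂.W :=
        fun x => if x ∈ X then Sum.inl (D₁.γ x) else Sum.inr (D₂.γ x)
      have hγin : ∀ x, x ∈ X → γγ x = Sum.inl (D₁.γ x) := by
        intro x h
        show (if x ∈ X then Sum.inl (D₁.γ x) else Sum.inr (D₂.γ x)) = _
        rw [if_pos h]
      have hγout : ∀ x, x ∉ X → γγ x = Sum.inr (D₂.γ x) := by
        intro x h
        show (if x ∈ X then Sum.inl (D₁.γ x) else Sum.inr (D₂.γ x)) = _
        rw [if_neg h]
      have projL : ∀ (w z : V) (pw : TT.Walk (γγ w) (γγ z)), pw.IsPath →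
          ∀ e₁ : Sym2 D₁.W, Sym2.map Sum.inl e₁ ∈ pw.edges →
          ∃ q : D₁.T.Walk (D₁.γ w) (D₁.γ z), q.IsPath ∧ e₁ ∈ q.edges := by
        intro w z pw hpw e₁ he₁
        by_cases hw : w ∈ X <;> by_cases hz : z ∈ X
        · have hpwP : (pw.copy (hγin w hw) (hγin z hz)).IsPath :=
            (SimpleGraph.Walk.isPath_copy _ _ _).2 hpw
          have hbr : s(Sum.inl (D₁.γ v), Sum.inr (D₂.γ u)) ∉
              (pw.copy (hγin w hw) (hγin z hz)).edges := by
            intro hmem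
            exact walk_bridge_side _ hpwP.isTrail hmem rfl
          obtain ⟨y, q, hy, he, hs⟩ := walk_proj_left _ hbr (D₁.γ w) rfl
          obtain rfl : D₁.γ z = y := by injection hy
          refine ⟨q, ?_, ?_⟩
          · rw [SimpleGraph.Walk.isPath_def]
            have hnd := hpwP.support_nodup
            rw [hs] at hnd
            exact hnd.of_map _
          · have hmem : Sym2.map Sum.inl e₁ ∈ (pw.copy (hγin w hw) (hγin z hz)).edges := by
              rw [SimpleGraph.Walk.edges_copy]; exact he₁
            rw [he] at hmem
            obtain ⟨e', he', heq⟩ := List.mem_map.1 hmem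
            rwa [← Sym2.map.injective Sum.inl_injective heq]
        · have hpwP : (pw.copy (hγin w hw) (hγout z hz)).IsPath :=
            (SimpleGraph.Walk.isPath_copy _ _ _).2 hpw
          obtain ⟨q₁, q₂, he, hs⟩ :=
            walk_proj_cross _ hpwP.isTrail (D₁.γ w) (D₂.γ z) rfl rfl
          have hmem : Sym2.map Sum.inl e₁ ∈ (pw.copy (hγin w hw) (hγout z hz)).edges := by
            rw [SimpleGraph.Walk.edges_copy]; exact he₁
          rw [he] at hmem
          rcases List.mem_append.1 hmem with hmem | hmem
          · obtain ⟨e', he', heq⟩ := List.mem_map.1 hmem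
            have he₁q : e₁ ∈ q₁.edges := by
              rwa [← Sym2.map.injective Sum.inl_injective heq]
            refine ⟨q₁.copy rfl (hγ1out z hz).symm, ?_, by
              rwa [SimpleGraph.Walk.edges_copy]⟩
            rw [SimpleGraph.Walk.isPath_copy, SimpleGraph.Walk.isPath_def]
            have hnd := hpwP.support_nodup
            rw [hs] at hnd
            exact hnd.of_append_left.of_map _
          · rcases List.mem_cons.1 hmem with heq | hmem
            · exact absurd heq (mapinl_ne_bridge _ _ _)
            · obtain ⟨e', he', heq⟩ := List.mem_map.1 hmem
              exact absurd heq.symm (mapinl_ne_mapinr _ _)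
        · have hpwP : ((pw.copy (hγout w hw) (hγin z hz)).reverse).IsPath :=
            ((SimpleGraph.Walk.isPath_copy _ _ _).2 hpw).reverse
          obtain ⟨q₁, q₂, he, hs⟩ :=
            walk_proj_cross _ hpwP.isTrail (D₁.γ z) (D₂.γ w) rfl rfl
          have hmem : Sym2.map Sum.inl e₁ ∈
              ((pw.copy (hγout w hw) (hγin z hz)).reverse).edges := by
            rw [SimpleGraph.Walk.edges_reverse, List.mem_reverse,
              SimpleGraph.Walk.edges_copy]
            exact he₁
          rw [he] at hmem
          rcases List.mem_append.1 hmem with hmem | hmem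
          · obtain ⟨e', he', heq⟩ := List.mem_map.1 hmem
            have he₁q : e₁ ∈ q₁.edges := by
              rwa [← Sym2.map.injective Sum.inl_injective heq]
            refine ⟨(q₁.copy rfl (hγ1out w hw).symm).reverse, ?_, ?_⟩
            · apply SimpleGraph.Walk.IsPath.reverse
              rw [SimpleGraph.Walk.isPath_copy, SimpleGraph.Walk.isPath_def]
              have hnd := hpwP.support_nodup
              rw [hs] at hnd
              exact hnd.of_append_left.of_map _
            · rw [SimpleGraph.Walk.edges_reverse, List.mem_reverse,
                SimpleGraph.Walk.edges_copy]
              exact he₁q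
          · rcases List.mem_cons.1 hmem with heq | hmem
            · exact absurd heq (mapinl_ne_bridge _ _ _)
            · obtain ⟨e', he', heq⟩ := List.mem_map.1 hmem
              exact absurd heq.symm (mapinl_ne_mapinr _ _)
        · have hpwP : (pw.copy (hγout w hw) (hγout z hz)).IsPath :=
            (SimpleGraph.Walk.isPath_copy _ _ _).2 hpw
          have hbr : s(Sum.inl (D₁.γ v), Sum.inr (D₂.γ u)) ∉
              (pw.copy (hγout w hw) (hγout z hz)).edges := by
            intro hmem
            exact walk_bridge_side _ hpwP.isTrail hmem rfl
          obtain ⟨y, q, hy, he, hs⟩ := walk_proj_right _ hbr (D₂.γ w) rfl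
          have hmem : Sym2.map Sum.inl e₁ ∈ (pw.copy (hγout w hw) (hγout z hz)).edges := by
            rw [SimpleGraph.Walk.edges_copy]; exact he₁
          rw [he] at hmem
          obtain ⟨e', he', heq⟩ := List.mem_map.1 hmem
          exact absurd heq (mapinl_ne_mapinr _ _).symm
      have projR : ∀ (w z : V) (pw : TT.Walk (γγ w) (γγ z)), pw.IsPath →
          ∀ e₂ : Sym2 D₂.W, Sym2.map Sum.inr e₂ ∈ pw.edges →
          ∃ q : D₂.T.Walk (D₂.γ w) (D₂.γ z), q.IsPath ∧ e₂ ∈ q.edges := by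
        intro w z pw hpw e₂ he₂
        by_cases hw : w ∈ X <;> by_cases hz : z ∈ X
        · have hpwP : (pw.copy (hγin w hw) (hγin z hz)).IsPath :=
            (SimpleGraph.Walk.isPath_copy _ _ _).2 hpw
          have hbr : s(Sum.inl (D₁.γ v), Sum.inr (D₂.γ u)) ∉
              (pw.copy (hγin w hw) (hγin z hz)).edges := by
            intro hmem
            exact walk_bridge_side _ hpwP.isTrail hmem rfl
          obtain ⟨y, q, hy, he, hs⟩ := walk_proj_left _ hbr (D₁.γ w) rfl
          have hmem : Sym2.map Sum.inr e₂ ∈ (pw.copy (hγin w hw) (hγin z hz)).edges := by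
            rw [SimpleGraph.Walk.edges_copy]; exact he₂
          rw [he] at hmem
          obtain ⟨e', he', heq⟩ := List.mem_map.1 hmem
          exact absurd heq (mapinl_ne_mapinr _ _)
        · have hpwP : (pw.copy (hγin w hw) (hγout z hz)).IsPath :=
            (SimpleGraph.Walk.isPath_copy _ _ _).2 hpw
          obtain ⟨q₁, q₂, he, hs⟩ :=
            walk_proj_cross _ hpwP.isTrail (D₁.γ w) (D₂.γ z) rfl rfl
          have hmem : Sym2.map Sum.inr e₂ ∈ (pw.copy (hγin w hw) (hγout z hz)).edges := by
            rw [SimpleGraph.Walk.edges_copy]; exact he₂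
          rw [he] at hmem
          rcases List.mem_append.1 hmem with hmem | hmem
          · obtain ⟨e', he', heq⟩ := List.mem_map.1 hmem
            exact absurd heq (mapinl_ne_mapinr _ _)
          · rcases List.mem_cons.1 hmem with heq | hmem
            · exact absurd heq (mapinr_ne_bridge _ _ _)
            · obtain ⟨e', he', heq⟩ := List.mem_map.1 hmem
              have he₂q : e₂ ∈ q₂.edges := by
                rwa [← Sym2.map.injective Sum.inr_injective heq]
              refine ⟨q₂.copy (hγ2in w hw).symm rfl, ?_, by
                rwa [SimpleGraph.Walk.edges_copy]⟩
              rw [SimpleGraph.Walk.isPath_copy, SimpleGraph.Walk.isPath_def]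
              have hnd := hpwP.support_nodup
              rw [hs] at hnd
              exact hnd.of_append_right.of_map _
        · have hpwP : ((pw.copy (hγout w hw) (hγin z hz)).reverse).IsPath :=
            ((SimpleGraph.Walk.isPath_copy _ _ _).2 hpw).reverse
          obtain ⟨q₁, q₂, he, hs⟩ :=
            walk_proj_cross _ hpwP.isTrail (D₁.γ z) (D₂.γ w) rfl rfl
          have hmem : Sym2.map Sum.inr e₂ ∈
              ((pw.copy (hγout w hw) (hγin z hz)).reverse).edges := by
            rw [SimpleGraph.Walk.edges_reverse, List.mem_reverse,
              SimpleGraph.Walk.edges_copy]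
            exact he₂
          rw [he] at hmem
          rcases List.mem_append.1 hmem with hmem | hmem
          · obtain ⟨e', he', heq⟩ := List.mem_map.1 hmem
            exact absurd heq (mapinl_ne_mapinr _ _)
          · rcases List.mem_cons.1 hmem with heq | hmem
            · exact absurd heq (mapinr_ne_bridge _ _ _)
            · obtain ⟨e', he', heq⟩ := List.mem_map.1 hmem
              have he₂q : e₂ ∈ q₂.edges := by
                rwa [← Sym2.map.injective Sum.inr_injective heq]
              refine ⟨(q₂.copy (hγ2in z hz).symm rfl).reverse, ?_, ?_⟩
              · apply SimpleGraph.Walk.IsPath.reverse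
                rw [SimpleGraph.Walk.isPath_copy, SimpleGraph.Walk.isPath_def]
                have hnd := hpwP.support_nodup
                rw [hs] at hnd
                exact hnd.of_append_right.of_map _
              · rw [SimpleGraph.Walk.edges_reverse, List.mem_reverse,
                  SimpleGraph.Walk.edges_copy]
                exact he₂q
        · have hpwP : (pw.copy (hγout w hw) (hγout z hz)).IsPath :=
            (SimpleGraph.Walk.isPath_copy _ _ _).2 hpw
          have hbr : s(Sum.inl (D₁.γ v), Sum.inr (D₂.γ u)) ∉
              (pw.copy (hγout w hw) (hγout z hz)).edges := by
            intro hmem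
            exact walk_bridge_side _ hpwP.isTrail hmem rfl
          obtain ⟨y, q, hy, he, hs⟩ := walk_proj_right _ hbr (D₂.γ w) rfl
          obtain rfl : D₂.γ z = y := by injection hy
          refine ⟨q, ?_, ?_⟩
          · rw [SimpleGraph.Walk.isPath_def]
            have hnd := hpwP.support_nodup
            rw [hs] at hnd
            exact hnd.of_map _
          · have hmem : Sym2.map Sum.inr e₂ ∈ (pw.copy (hγout w hw) (hγout z hz)).edges := by
              rw [SimpleGraph.Walk.edges_copy]; exact he₂
            rw [he] at hmem
            obtain ⟨e', he', heq⟩ := List.mem_map.1 hmem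
            rwa [← Sym2.map.injective Sum.inr_injective heq]
      have bridgeSides : ∀ (w z : V) (pw : TT.Walk (γγ w) (γγ z)), pw.IsPath →
          s(Sum.inl (D₁.γ v), Sum.inr (D₂.γ u)) ∈ pw.edges →
          (w ∈ X ∧ z ∉ X) ∨ (z ∈ X ∧ w ∉ X) := by
        intro w z pw hpw hmem
        by_cases hw : w ∈ X <;> by_cases hz : z ∈ X
        · exfalso
          have hpwP : (pw.copy (hγin w hw) (hγin z hz)).IsPath :=
            (SimpleGraph.Walk.isPath_copy _ _ _).2 hpw
          exact walk_bridge_side _ hpwP.isTrail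
            (by rw [SimpleGraph.Walk.edges_copy]; exact hmem) rfl
        · exact Or.inl ⟨hw, hz⟩
        · exact Or.inr ⟨hz, hw⟩
        · exfalso
          have hpwP : (pw.copy (hγout w hw) (hγout z hz)).IsPath :=
            (SimpleGraph.Walk.isPath_copy _ _ _).2 hpw
          exact walk_bridge_side _ hpwP.isTrail
            (by rw [SimpleGraph.Walk.edges_copy]; exact hmem) rfl
      refine ⟨{
        W := D₁.W ⊕ D₂.W
        fin := inferInstance
        T := TT
        γ := γγ
        α := sumAlpha D₁.α D₂.α (ecut G X)
        tree := sumG_isTree D₁.tree D₂.tree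
        const := ?_
        reps := ?_
        sep := ?_
        edge := ?_ }⟩
      · -- const
        intro t ht s hs
        have hn := (hctx.1 t ht).1
        rcases hresp t ht with hsub | hdis
        · have htH₁ : (t.1, t.2.1, if t.2.2 ∈ X then t.2.2 else u) ∈ H₁ := by
            rw [hH₁]
            exact List.mem_cons_of_mem _ (List.mem_map.2
              ⟨t, List.mem_filter.2 ⟨ht, by simpa using hsub⟩, rfl⟩)
          rw [hγin s (hsub hs), hγin t.2.1 (hsub hn)]
          exact congrArg Sum.inl (D₁.const _ htH₁ s hs)
        · have htH₂ : (t.1, t.2.1, if t.2.2 ∈ X then v else t.2.2) ∈ H₂ := by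
            rw [hH₂]
            exact List.mem_cons_of_mem _ (List.mem_map.2
              ⟨t, List.mem_filter.2 ⟨ht, by simpa using hdis⟩, rfl⟩)
          rw [hγout s (Finset.disjoint_left.1 hdis hs),
            hγout t.2.1 (Finset.disjoint_left.1 hdis hn)]
          exact congrArg Sum.inr (D₂.const _ htH₂ s hs)
      · -- reps
        intro t ht
        have hn := (hctx.1 t ht).1
        rcases hresp t ht with hsub | hdis
        · have htH₁ : (t.1, t.2.1, if t.2.2 ∈ X then t.2.2 else u) ∈ H₁ := by
            rw [hH₁]
            exact List.mem_cons_of_mem _ (List.mem_map.2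
              ⟨t, List.mem_filter.2 ⟨ht, by simpa using hsub⟩, rfl⟩)
          obtain ⟨ρ, hρ, hγρ, hm⟩ := D₁.reps _ htH₁
          refine ⟨ρ, hR₁R hρ, ?_, hm⟩
          rw [hγin ρ (hR₁X ρ hρ), hγin t.2.1 (hsub hn)]
          exact congrArg Sum.inl hγρ
        · have htH₂ : (t.1, t.2.1, if t.2.2 ∈ X then v else t.2.2) ∈ H₂ := by
            rw [hH₂]
            exact List.mem_cons_of_mem _ (List.mem_map.2
              ⟨t, List.mem_filter.2 ⟨ht, by simpa using hdis⟩, rfl⟩)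
          obtain ⟨ρ, hρ, hγρ, hm⟩ := D₂.reps _ htH₂
          refine ⟨ρ, hR₂R hρ, ?_, hm⟩
          rw [hγout ρ (hR₂X ρ hρ), hγout t.2.1 (Finset.disjoint_left.1 hdis hn)]
          exact congrArg Sum.inr hγρ
      · -- sep
        intro u' hu' v' hv' heq hne
        by_cases h1 : u' ∈ X <;> by_cases h2 : v' ∈ X
        · rw [hγin u' h1, hγin v' h2] at heq
          exact D₁.sep u' (Finset.mem_inter.2 ⟨hu', h1⟩) v' (Finset.mem_inter.2 ⟨hv', h2⟩)
            (by injection heq) hne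
        · rw [hγin u' h1, hγout v' h2] at heq
          exact absurd heq (by simp)
        · rw [hγout u' h1, hγin v' h2] at heq
          exact absurd heq (by simp)
        · rw [hγout u' h1, hγout v' h2] at heq
          exact D₂.sep u' (Finset.mem_sdiff.2 ⟨hu', h1⟩) v' (Finset.mem_sdiff.2 ⟨hv', h2⟩)
            (by injection heq) hne
      · -- edge
        have bridgeMain : ∃ (X' : Finset V) (p q : V),
            sumAlpha D₁.α D₂.α (ecut G X) s(Sum.inl (D₁.γ v), Sum.inr (D₂.γ u)) = ecut G X' ∧
            (ecut G X').card < k ∧ p ∈ R ∧ q ∈ R ∧ p ∈ X' ∧ q ∉ X' ∧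
            mcv G p q = (ecut G X').card ∧
            s(Sum.inl (D₁.γ v), Sum.inr (D₂.γ u)) = s(γγ p, γγ q) ∧
            ∀ w z : V, ∀ pw : TT.Walk (γγ w) (γγ z), pw.IsPath →
              s(Sum.inl (D₁.γ v), Sum.inr (D₂.γ u)) ∈ pw.edges →
              (w ∈ X' ∧ z ∉ X') ∨ (z ∈ X' ∧ w ∉ X') := by
          obtain ⟨ρ₁, hρ₁, hγρ₁, hmρ₁⟩ := D₁.reps _ hheadH₁
          obtain ⟨ρ₂, hρ₂, hγρ₂, hmρ₂⟩ := D₂.reps _ hheadH₂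
          have h1 : mcv G v ρ₁ = (ecut G X).card := by rw [← ecut_compl G X]; exact hmρ₁
          have h2 : mcv G u ρ₂ = (ecut G X).card := hmρ₂
          refine ⟨X, ρ₁, ρ₂, sumAlpha_lr _ _, hcut_lt, hR₁R hρ₁, hR₂R hρ₂,
            hR₁X _ hρ₁, hR₂X _ hρ₂, ?_, ?_, ?_⟩
          · apply le_antisymm (mcv_le (hR₁X _ hρ₁) (hR₂X _ hρ₂))
            by_cases hvρ : v = ρ₂
            · rw [← hvρ, mcv_symm, h1]
            · have hρρ : ρ₁ ≠ ρ₂ := fun hc => (hR₂X _ hρ₂) (hc ▸ hR₁X _ hρ₁)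
              have t1 := mcv_triangle (G := G) v hρρ
              have t2 := mcv_triangle (G := G) u hvρ
              have h3 : mcv G ρ₁ v = (ecut G X).card := by rw [mcv_symm]; exact h1
              have h4 : mcv G v u = (ecut G X).card := by
                rw [mcv_symm]; exact hXmin.symm
              rw [h4, h2, min_self] at t2
              rw [h3, min_eq_left t2] at t1
              exact t1
          · rw [hγin ρ₁ (hR₁X _ hρ₁), hγout ρ₂ (hR₂X _ hρ₂), hγρ₁, hγρ₂]
          · exact bridgeSides
        intro e he
        induction e using Sym2.ind with
        | _ n₁ n₂ =>
          have hadj : TT.Adj n₁ n₂ := (TT.mem_edgeSet).1 he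
          rcases n₁ with x | x <;> rcases n₂ with y | y
          · -- left edge
            have hadj₁ : D₁.T.Adj x y := hadj
            obtain ⟨X₁, p, q, hα₁, hlt₁, hpR, hqR, hpX₁, hqX₁, hm₁, hend₁, halign₁⟩ :=
              D₁.edge s(x, y) hadj₁
            refine ⟨X₁, p, q, ?_, hlt₁, hR₁R hpR, hR₁R hqR, hpX₁, hqX₁, hm₁, ?_, ?_⟩
            · rw [sumAlpha_ll]; exact hα₁
            · rw [hγin p (hR₁X p hpR), hγin q (hR₁X q hqR)]
              have := congrArg (Sym2.map (Sum.inl : D₁.W → D₁.W ⊕ D₂.W)) hend₁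
              rwa [Sym2.map_pair_eq, Sym2.map_pair_eq] at this
            · intro w z pw hpw hew
              have hmm : Sym2.map Sum.inl s(x, y) ∈ pw.edges := by
                rwa [Sym2.map_pair_eq]
              obtain ⟨qw, hqP, hqe⟩ := projL w z pw hpw s(x, y) hmm
              exact halign₁ w z qw hqP hqe
          · -- bridge
            obtain ⟨hx, hy⟩ : x = D₁.γ v ∧ y = D₂.γ u := hadj
            subst hx; subst hy
            exact bridgeMain
          · -- reversed bridge
            obtain ⟨hx, hy⟩ : x = D₂.γ u ∧ y = D₁.γ v := hadj
            subst hx; subst hy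
            rw [show (s(Sum.inr (D₂.γ u), Sum.inl (D₁.γ v)) : Sym2 (D₁.W ⊕ D₂.W)) =
              s(Sum.inl (D₁.γ v), Sum.inr (D₂.γ u)) from Sym2.eq_swap]
            exact bridgeMain
          · -- right edge
            have hadj₂ : D₂.T.Adj x y := hadj
            obtain ⟨X₂, p, q, hα₂, hlt₂, hpR, hqR, hpX₂, hqX₂, hm₂, hend₂, halign₂⟩ :=
              D₂.edge s(x, y) hadj₂
            refine ⟨X₂, p, q, ?_, hlt₂, hR₂R hpR, hR₂R hqR, hpX₂, hqX₂, hm₂, ?_, ?_⟩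
            · rw [sumAlpha_rr]; exact hα₂
            · rw [hγout p (hR₂X p hpR), hγout q (hR₂X q hqR)]
              have := congrArg (Sym2.map (Sum.inr : D₂.W → D₁.W ⊕ D₂.W)) hend₂
              rwa [Sym2.map_pair_eq, Sym2.map_pair_eq] at this
            · intro w z pw hpw hew
              have hmm : Sym2.map Sum.inr s(x, y) ∈ pw.edges := by
                rwa [Sym2.map_pair_eq]
              obtain ⟨qw, hqP, hqe⟩ := projR w z pw hpw s(x, y) hmm
              exact halign₂ w z qw hqP hqe
    · push_neg at hsplit
      exact ght_base G k hctx fun u hu v hv hne => hsplit u hu v hv hne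

end Main
lemma ght_chain (D : GHT G k Finset.univ []) :
    ∀ (n : ℕ) (z b : V) (p : D.T.Walk (D.γ z) (D.γ b)), p.length ≤ n → p.IsPath → z ≠ b →
    k ≤ mcv G z b ∨ ∃ e ∈ p.edges, (D.α e).card ≤ mcv G z b := by
  intro n
  induction n with
  | zero =>
    intro z b p hl hp hzb
    by_cases hγ : D.γ z = D.γ b
    · exact Or.inl (D.sep z (Finset.mem_univ z) b (Finset.mem_univ b) hγ hzb)
    · obtain ⟨w₁, hadj, q, rfl⟩ := SimpleGraph.Walk.exists_eq_cons_of_ne hγ p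
      rw [SimpleGraph.Walk.length_cons] at hl
      omega
  | succ n ihn =>
    intro z b p hl hp hzb
    by_cases hγ : D.γ z = D.γ b
    · exact Or.inl (D.sep z (Finset.mem_univ z) b (Finset.mem_univ b) hγ hzb)
    · obtain ⟨w₁, hadj, q, rfl⟩ := SimpleGraph.Walk.exists_eq_cons_of_ne hγ p
      have he₁ : s(D.γ z, w₁) ∈ D.T.edgeSet := hadj
      obtain ⟨X₁, P₀, Q₀, hα, hltk, _, _, _, _, hm, hend, _⟩ := D.edge _ he₁
      have he₁mem : s(D.γ z, w₁) ∈ (SimpleGraph.Walk.cons hadj q).edges := by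
        rw [SimpleGraph.Walk.edges_cons]
        exact List.mem_cons_self
      have hcard₁ : (D.α s(D.γ z, w₁)).card = (ecut G X₁).card := by rw [hα]
      have main : ∀ P Q : V, D.γ P = D.γ z → D.γ Q = w₁ →
          mcv G P Q = (ecut G X₁).card →
          k ≤ mcv G z b ∨
            ∃ e ∈ (SimpleGraph.Walk.cons hadj q).edges, (D.α e).card ≤ mcv G z b := by
        intro P Q hPz hQw hmPQ
        have key : k ≤ mcv G P b ∨
            ∃ e ∈ (SimpleGraph.Walk.cons hadj q).edges, (D.α e).card ≤ mcv G P b := by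
          by_cases hQb : Q = b
          · subst hQb
            refine Or.inr ⟨s(D.γ z, w₁), he₁mem, ?_⟩
            rw [hcard₁, ← hmPQ]
          · have hPb : P ≠ b := by
              intro hc
              exact hγ (by rw [← hPz, hc])
            have hF1 : min (mcv G P Q) (mcv G Q b) ≤ mcv G P b :=
              mcv_triangle (G := G) Q hPb
            have hq' : (q.copy hQw.symm rfl).IsPath := by
              rw [SimpleGraph.Walk.isPath_copy]
              exact ((SimpleGraph.Walk.cons_isPath_iff hadj q).1 hp).1
            have hlq : (q.copy hQw.symm rfl).length ≤ n := by
              rw [SimpleGraph.Walk.length_copy]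
              rw [SimpleGraph.Walk.length_cons] at hl
              omega
            have IH := ihn Q b (q.copy hQw.symm rfl) hlq hq' hQb
            have hqe : ∀ e, e ∈ (q.copy hQw.symm rfl).edges →
                e ∈ (SimpleGraph.Walk.cons hadj q).edges := by
              intro e hee
              rw [SimpleGraph.Walk.edges_copy] at hee
              rw [SimpleGraph.Walk.edges_cons]
              exact List.mem_cons_of_mem _ hee
            rcases le_total (mcv G P Q) (mcv G Q b) with hmin | hmin
            · rw [min_eq_left hmin] at hF1
              refine Or.inr ⟨s(D.γ z, w₁), he₁mem, ?_⟩
              rw [hcard₁, ← hmPQ]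
              exact hF1
            · rw [min_eq_right hmin] at hF1
              rcases IH with hk | ⟨e, hee, hce⟩
              · exact Or.inl (le_trans hk hF1)
              · exact Or.inr ⟨e, hqe e hee, le_trans hce hF1⟩
        by_cases hzP : z = P
        · subst hzP
          exact key
        · have hk1 : k ≤ mcv G z P :=
            D.sep z (Finset.mem_univ z) P (Finset.mem_univ P) hPz.symm hzP
          have ht1 : min (mcv G z P) (mcv G P b) ≤ mcv G z b :=
            mcv_triangle (G := G) P hzb
          rcases le_total (mcv G z P) (mcv G P b) with hmin | hmin
          · rw [min_eq_left hmin] at ht1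
            exact Or.inl (le_trans hk1 ht1)
          · rw [min_eq_right hmin] at ht1
            rcases key with hk | ⟨e, hee, hce⟩
            · exact Or.inl (le_trans hk ht1)
            · exact Or.inr ⟨e, hee, le_trans hce ht1⟩
      rcases Sym2.eq_iff.1 hend with ⟨h1, h2⟩ | ⟨h1, h2⟩
      · exact main P₀ Q₀ h1.symm h2.symm hm
      · refine main Q₀ P₀ h1.symm h2.symm ?_
        rw [mcv_symm]
        exact hm
/-- For every finite graph `G` and every integer `k ≥ 1`, there exists a `k`-Gomory-Hu tree
of `G`: a tree `T`, a map `γ : V(G) → V(T)` and an assignment `α` of edge sets of `G` to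
edges of `T` such that (1) for all `u, v` and every edge `e` on the `γ u`–`γ v` path in `T`,
`α e` is a `(u,v)`-cutset of size `< k`, and (2) whenever some `(u,v)`-cutset of size `< k`
exists, some edge `e` on the `γ u`–`γ v` path is such that `α e` is a minimum-size
`(u,v)`-cutset. -/
theorem exists_kGomoryHu_tree (G : SimpleGraph V) (k : ℕ) (hk : 1 ≤ k) :
    ∃ (W : Type) (_ : Fintype W) (T : SimpleGraph W) (γ : V → W)
      (α : Sym2 W → Finset (Sym2 V)),
      T.IsTree ∧
      (∀ u v : V, ∀ p : T.Walk (γ u) (γ v), p.IsPath → ∀ e ∈ p.edges,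
        IsCutset G u v (α e) ∧ (α e).card < k) ∧
      (∀ u v : V, (∃ C : Finset (Sym2 V), IsCutset G u v C ∧ C.card < k) →
        ∃ p : T.Walk (γ u) (γ v), p.IsPath ∧ ∃ e ∈ p.edges,
          IsCutset G u v (α e) ∧
          ∀ C' : Finset (Sym2 V), IsCutset G u v C' → (α e).card ≤ C'.card) := by
  rcases isEmpty_or_nonempty V with hemp | hne
  · refine ⟨PUnit, inferInstance, ⊥, fun v => isEmptyElim v, fun _ => ∅, punit_isTree,
      fun u => isEmptyElim u, fun u => isEmptyElim u⟩
  · obtain ⟨D⟩ := ght_build G k hk (Fintype.card V) Finset.univ []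
      (le_of_eq Finset.card_univ) ⟨Classical.arbitrary V, Finset.mem_univ _⟩
      ⟨by simp, by simp, List.Pairwise.nil⟩
    have cond1 : ∀ u v : V, ∀ p : D.T.Walk (D.γ u) (D.γ v), p.IsPath → ∀ e ∈ p.edges,
        IsCutset G u v (D.α e) ∧ (D.α e).card < k := by
      intro u v p hp e he
      have heE : e ∈ D.T.edgeSet := p.edges_subset_edgeSet he
      obtain ⟨X₁, P, Q, hα, hlt, _, _, _, _, _, _, halign⟩ := D.edge e heE
      rcases halign u v p hp he with ⟨h1, h2⟩ | ⟨h1, h2⟩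
      · exact ⟨hα ▸ isCutset_ecut h1 h2, hα ▸ hlt⟩
      · refine ⟨?_, hα ▸ hlt⟩
        have hcut := isCutset_ecut (G := G) (X := X₁ᶜ)
          (by simpa using h2) (by simpa using h1)
        rw [ecut_compl] at hcut
        exact hα ▸ hcut
    refine ⟨D.W, D.fin, D.T, D.γ, D.α, D.tree, cond1, ?_⟩
    intro u v ⟨C, hC, hCk⟩
    obtain ⟨Y, huY, hvY, rfl⟩ := isCutset_iff.1 hC
    have hmlt : mcv G u v < k := lt_of_le_of_lt (mcv_le huY hvY) hCk
    have huv : u ≠ v := fun hc => hvY (hc ▸ huY)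
    have hγ : D.γ u ≠ D.γ v := fun hc =>
      absurd (D.sep u (Finset.mem_univ u) v (Finset.mem_univ v) hc huv) (by omega)
    obtain ⟨w⟩ := D.tree.1.preconnected (D.γ u) (D.γ v)
    obtain ⟨p0, hp0⟩ := w.toPath
    rcases ght_chain D p0.length u v p0 le_rfl hp0 huv with hk' | ⟨e, hee, hce⟩
    · omega
    · refine ⟨p0, hp0, e, hee, (cond1 u v p0 hp0 e hee).1, ?_⟩
      intro C' hC'
      obtain ⟨Y', huY', hvY', rfl⟩ := isCutset_iff.1 hC'
      exact le_trans hce (mcv_le huY' hvY')
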